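/- Let M be the linear subspace of ℝ^{2m+2n} of points (x⁺, y⁺, x⁻, y⁻) with x⁺ + x⁻ = 0 and y⁺ + y⁻ = 0. Then the image of the octagon O_f under the embedding (x,y) ↦ (x, y, −x, −y) equals M ∩ tconv(A, B⁺_1,…,B⁺_m, B⁻_1,…,B⁻_m, C⁺_1,…,C⁺_n, C⁻_1,…,C⁻_n), where: A = (x̲_1,…,x̲_m, m_1,…,m_n, −x̄_1,…,−x̄_m, −M_1,…,−M_n); for k ∈ {1,…,m}, B⁺_k has x⁺_k = x̄_k, x⁺_j = x̲_j (j ≠ k), y⁺_i = m_i + δ_{i,k}, x⁻_j = −x̄_j (all j), y⁻_i = −M_i + γ_{i,k}; B⁻_k has x⁺_j = x̲_j (all j), y⁺_i = m_i + γ_{i,k}, x⁻_k = −x̲_k, x⁻_j = −x̄_j (j ≠ k), y⁻_i = −M_i + δ_{i,k}; for l ∈ {1,…,n}, C⁺_l has x⁺_j = x̲_j + δ_{l,j}, y⁺_l = M_l, y⁺_i = M_l − Δ_{l,i} (i ≠ l), x⁻_j = −x̄_j + γ_{l,j}, y⁻_l = −M_l, y⁻_i = M_l − Γ_{l,i} (i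 ≠ l); C⁻_l has x⁺_j = x̲_j + γ_{l,j}, y⁺_l = m_l, y⁺_i = −m_l + L_{l,i} (i ≠ l), x⁻_j = −x̄_j + δ_{l,j}, y⁻_l = −m_l, y⁻_i = −m_l − Δ_{i,l} (i ≠ l). -/

import Mathlib

def tconv {d i : Type*} [Fintype i] (v : i → d → ℝ) : Set (d → ℝ) :=
  { x | ∃ lam : i → ℝ, (∀ k, lam k ≤ 0) ∧ (∃ k, lam k = 0) ∧
      ∀ t, IsGreatest (Set.range fun k => lam k + v k t) (x t) }

/-- The `1 + 2m + 2n` generators `A, B⁺_k, B⁻_k, C⁺_l, C⁻_l` in `ℝ^(2m+2n)`. -/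
noncomputable def octGens (m n : ℕ) (xl xu : Fin m → ℝ) (mlow Mup : Fin n → ℝ)
    (Delta Gam Lo : Fin n → Fin n → ℝ) (delta gam : Fin n → Fin m → ℝ) :
    Option ((Fin m ⊕ Fin m) ⊕ (Fin n ⊕ Fin n)) →
      ((Fin m ⊕ Fin n) ⊕ (Fin m ⊕ Fin n)) → ℝ
  | none =>
      Sum.elim (Sum.elim xl mlow) (Sum.elim (fun j => -xu j) (fun i => -Mup i))
  | some (Sum.inl (Sum.inl k)) =>
      Sum.elim
        (Sum.elim (fun j => if j = k then xu k else xl j) (fun i => mlow i + delta i k))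
        (Sum.elim (fun j => -xu j) (fun i => -Mup i + gam i k))
  | some (Sum.inl (Sum.inr k)) =>
      Sum.elim
        (Sum.elim xl (fun i => mlow i + gam i k))
        (Sum.elim (fun j => if j = k then -xl k else -xu j) (fun i => -Mup i + delta i k))
  | some (Sum.inr (Sum.inl l)) =>
      Sum.elim
        (Sum.elim (fun j => xl j + delta l j)
          (fun i => if i = l then Mup l else Mup l - Delta l i))
        (Sum.elim (fun j => -xu j + gam l j)
          (fun i => if i = l then -Mup l else Mup l - Gam l i))
  | some (Sum.inr (Sum.inr l)) =>
      Sum.elim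
        (Sum.elim (fun j => xl j + gam l j)
          (fun i => if i = l then mlow l else -mlow l + Lo l i))
        (Sum.elim (fun j => -xu j + delta l j)
          (fun i => if i = l then -mlow l else -mlow l - Delta i l))

namespace OctPW

/-- min-type term: `w * (if w<0 then u else l)` -/
noncomputable def mnt (a l u : ℝ) : ℝ := a * (if a < 0 then u else l)
/-- max-type term -/
noncomputable def mxt (a l u : ℝ) : ℝ := a * (if a < 0 then l else u)
noncomputable def dlt (a l u : ℝ) : ℝ := if a ≤ 0 then 0 else if a ≤ 1 then a * (u - l) else u - l
noncomputable def gmt (a l u : ℝ) : ℝ := if 0 ≤ a then 0 else if (-1:ℝ) ≤ a then -a * (u - l) else u - l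
/-- Delta-type term -/
noncomputable def mdt (a c l u : ℝ) : ℝ := (a - c) * (if a < c then l else u)
/-- Lo-type term -/
noncomputable def mst (a c l u : ℝ) : ℝ := (a + c) * (if a + c < 0 then u else l)
/-- Gam-type term -/
noncomputable def mSt (a c l u : ℝ) : ℝ := (a + c) * (if a + c < 0 then l else u)

variable {a c p q r l u : ℝ}

section
variable (h : l ≤ u)
include h

lemma L1 : 0 ≤ dlt a l u := by unfold dlt; split_ifs <;> nlinarith
lemma L2 : dlt a l u ≤ u - l := by unfold dlt; split_ifs <;> nlinarith
lemma L3 : 0 ≤ gmt a l u := by unfold gmt; split_ifs <;> nlinarith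
lemma L4 : gmt a l u ≤ u - l := by unfold gmt; split_ifs <;> nlinarith
lemma L5 : mnt a l u ≤ mxt a l u := by unfold mnt mxt; split_ifs <;> nlinarith
lemma L6 : mnt a l u + dlt a l u + gmt a l u ≤ mxt a l u := by
  unfold mnt mxt dlt gmt; split_ifs <;> nlinarith
lemma L8 : mxt a l u ≤ mxt c l u + mdt a c l u := by
  unfold mxt mdt; split_ifs <;> nlinarith
lemma L9 : mst a c l u ≤ mnt a l u + mxt c l u := by
  unfold mst mnt mxt; split_ifs <;> nlinarith
lemma L10 : mxt a l u + mnt c l u ≤ mSt a c l u := by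
  unfold mSt mnt mxt; split_ifs <;> nlinarith
lemma L11 : mnt a l u ≤ mnt c l u + mdt a c l u := by
  unfold mnt mdt; split_ifs <;> nlinarith
lemma L12 : mnt a l u + dlt a l u ≤ (mnt c l u + dlt c l u) + mdt a c l u := by
  unfold mnt dlt mdt; split_ifs <;> nlinarith
lemma L13 : mnt a l u + gmt a l u ≤ (mnt c l u + gmt c l u) + mdt a c l u := by
  unfold mnt gmt mdt; split_ifs <;> nlinarith
lemma L14 : 0 ≤ mdt a c l u + mdt c a l u := by unfold mdt; split_ifs <;> nlinarith
lemma L15 : mdt p r l u ≤ mdt p q l u + mdt q r l u := by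
  unfold mdt; split_ifs <;> nlinarith
lemma L16 : 2 * mnt a l u ≤ mst a c l u + mdt a c l u := by
  unfold mnt mst mdt; split_ifs <;> nlinarith
lemma L17b : mst a c l u ≤ 2 * mnt c l u + mdt a c l u := by
  unfold mnt mst mdt; split_ifs <;> nlinarith
lemma L17 : mst a c l u ≤ 2 * mnt a l u + mdt c a l u := by
  unfold mnt mst mdt; split_ifs <;> nlinarith
lemma L18 : mst p q l u ≤ mst p r l u + mdt q r l u := by
  unfold mst mdt; split_ifs <;> nlinarith
lemma L19 : mxt a l u - dlt a l u ≤ (mxt c l u - dlt c l u) + mdt a c l u := by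
  unfold mxt dlt mdt; split_ifs <;> nlinarith
lemma L20 : mst a c l u + dlt c l u ≤ (mnt a l u + gmt a l u) + mxt c l u := by
  unfold mst dlt mnt gmt mxt; split_ifs <;> nlinarith
lemma L21 : mdt a c l u ≤ mxt a l u - mnt c l u := by
  unfold mdt mxt mnt; split_ifs <;> nlinarith
lemma L22 : mdt a c l u + dlt a l u + dlt c l u ≤ mxt a l u - mnt c l u + (u - l) := by
  unfold mdt dlt mxt mnt; split_ifs <;> nlinarith
lemma L23 : mnt a l u + mnt c l u ≤ mst a c l u := by
  unfold mnt mst; split_ifs <;> nlinarith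
lemma L24 : (mnt a l u + gmt a l u) + (mnt c l u + dlt c l u) ≤ mst a c l u + (u - l) := by
  unfold mnt gmt dlt mst; split_ifs <;> nlinarith
lemma L25 : mnt a l u + mxt c l u ≤ mSt a c l u := by
  unfold mnt mxt mSt; split_ifs <;> nlinarith
lemma L26 : (mnt a l u + dlt a l u) + (mxt c l u - gmt c l u) ≤ mSt a c l u := by
  unfold mnt dlt mxt gmt mSt; split_ifs <;> nlinarith
lemma L27 : (mnt a l u + gmt a l u) + (mxt c l u - dlt c l u) ≤ mSt a c l u := by
  unfold mnt gmt mxt dlt mSt; split_ifs <;> nlinarith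
lemma L28 : mSt a a l u = 2 * mxt a l u := by
  unfold mSt mxt; split_ifs <;> nlinarith
lemma L29 : 2 * mxt a l u ≤ mdt a c l u + mSt c a l u := by
  unfold mxt mdt mSt; split_ifs <;> nlinarith
lemma L30 : mSt p r l u ≤ mdt p q l u + mSt q r l u := by
  unfold mSt mdt; split_ifs <;> nlinarith
lemma L31 : mst a a l u = 2 * mnt a l u := by
  unfold mst mnt; split_ifs <;> nlinarith
lemma L32 : 2 * mnt a l u + mdt c a l u ≤ mSt a c l u := by
  unfold mnt mdt mSt; split_ifs <;> nlinarith
lemma L33 : mst a c l u ≤ mSt c a l u := by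
  unfold mst mSt; split_ifs <;> nlinarith
lemma L34 : mst a c l u ≤ mxt a l u + mnt c l u := by
  unfold mst mxt mnt; split_ifs <;> nlinarith
lemma L35 : mst a c l u + gmt a l u ≤ mxt a l u + (mnt c l u + dlt c l u) := by
  unfold mst gmt mxt mnt dlt; split_ifs <;> nlinarith
lemma L36 : mst a c l u + dlt a l u ≤ mxt a l u + (mnt c l u + gmt c l u) := by
  unfold mst dlt mxt mnt gmt; split_ifs <;> nlinarith
lemma L37 : mst a c l u + mdt a c l u ≤ 2 * mxt a l u := by
  unfold mst mdt mxt; split_ifs <;> nlinarith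
lemma L38 : mst p q l u + mdt r p l u ≤ mSt q r l u := by
  unfold mst mdt mSt; split_ifs <;> nlinarith
lemma L44 : mst q r l u + mdt p r l u ≤ mSt p q l u := by
  unfold mst mdt mSt; split_ifs <;> nlinarith
lemma L39 : mst q r l u ≤ mdt q p l u + mst p r l u := by
  unfold mst mdt; split_ifs <;> nlinarith
lemma L40 : mxt a l u - gmt a l u ≤ (mxt c l u - gmt c l u) + mdt a c l u := by
  unfold mxt gmt mdt; split_ifs <;> nlinarith
lemma L41 : mst a c l u + gmt c l u ≤ (mnt a l u + dlt a l u) + mxt c l u := by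
  unfold mst gmt mnt dlt mxt; split_ifs <;> nlinarith
lemma L42 : mdt a c l u + gmt a l u + gmt c l u ≤ mxt a l u - mnt c l u + (u - l) := by
  unfold mdt gmt mxt mnt; split_ifs <;> nlinarith
lemma L43 : (mnt a l u + dlt a l u) + (mnt c l u + gmt c l u) ≤ mst a c l u + (u - l) := by
  unfold mnt dlt gmt mst; split_ifs <;> nlinarith
lemma L45 : dlt a l u + gmt a l u ≤ u - l := by
  unfold dlt gmt; split_ifs <;> nlinarith

end

lemma sum_with {m : ℕ} (f g : Fin m → ℝ) (k : Fin m) (e : ℝ)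
    (hk : e + f k ≤ g k) (h : ∀ j, f j ≤ g j) :
    e + ∑ j, f j ≤ ∑ j, g j := by
  classical
  rw [← Finset.add_sum_erase _ f (Finset.mem_univ k),
    ← Finset.add_sum_erase _ g (Finset.mem_univ k)]
  have := Finset.sum_le_sum (s := Finset.univ.erase k) (f := f) (g := g) (fun j _ => h j)
  linarith

lemma sum_with2 {m : ℕ} (f g : Fin m → ℝ) (k k' : Fin m) (e e' : ℝ) (hkk' : k ≠ k')
    (hk : e + f k ≤ g k) (hk' : e' + f k' ≤ g k') (h : ∀ j, f j ≤ g j) :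
    e + e' + ∑ j, f j ≤ ∑ j, g j := by
  classical
  have hmem : k' ∈ Finset.univ.erase k := Finset.mem_erase.2 ⟨Ne.symm hkk', Finset.mem_univ k'⟩
  rw [← Finset.add_sum_erase _ f (Finset.mem_univ k),
    ← Finset.add_sum_erase _ g (Finset.mem_univ k),
    ← Finset.add_sum_erase _ f hmem, ← Finset.add_sum_erase _ g hmem]
  have := Finset.sum_le_sum (s := (Finset.univ.erase k).erase k') (f := f) (g := g)
    (fun j _ => h j)
  linarith
end OctPW

theorem octagon_eq_manifold_inter_tropical (m n : ℕ) (hm : 1 ≤ m) (hn : 1 ≤ n)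
    (w : Fin n → Fin m → ℝ) (b : Fin n → ℝ)
    (xl xu : Fin m → ℝ) (hbounds : ∀ j, xl j ≤ xu j)
    (mlow Mup : Fin n → ℝ)
    (hmlow : ∀ i, mlow i = b i + ∑ j, w i j * (if w i j < 0 then xu j else xl j))
    (hMup : ∀ i, Mup i = b i + ∑ j, w i j * (if w i j < 0 then xl j else xu j))
    (Delta : Fin n → Fin n → ℝ) (delta : Fin n → Fin m → ℝ)
    (hDelta : ∀ i₁ i₂, Delta i₁ i₂ = (b i₁ - b i₂) +
        ∑ j, (w i₁ j - w i₂ j) * (if w i₁ j < w i₂ j then xl j else xu j))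
    (hdelta : ∀ i j, delta i j = if w i j ≤ 0 then 0
        else if w i j ≤ 1 then w i j * (xu j - xl j) else xu j - xl j)
    (Gam Lo : Fin n → Fin n → ℝ) (gam : Fin n → Fin m → ℝ)
    (hGam : ∀ i₁ i₂, Gam i₁ i₂ = (b i₁ + b i₂) +
        ∑ j, (w i₁ j + w i₂ j) * (if w i₁ j + w i₂ j < 0 then xl j else xu j))
    (hLo : ∀ i₁ i₂, Lo i₁ i₂ = (b i₁ + b i₂) +
        ∑ j, (w i₁ j + w i₂ j) * (if w i₁ j + w i₂ j < 0 then xu j else xl j))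
    (hgam : ∀ i j, gam i j = if 0 ≤ w i j then 0
        else if (-1 : ℝ) ≤ w i j then -(w i j) * (xu j - xl j) else xu j - xl j) :
    {z : ((Fin m ⊕ Fin n) ⊕ (Fin m ⊕ Fin n)) → ℝ |
        ∃ (x : Fin m → ℝ) (y : Fin n → ℝ),
          ((∀ j, xl j ≤ x j ∧ x j ≤ xu j) ∧
        (∀ i, mlow i ≤ y i ∧ y i ≤ Mup i) ∧
        (∀ i₁ i₂, y i₁ - y i₂ ≤ Delta i₁ i₂) ∧
        (∀ i j, mlow i - xu j + delta i j ≤ y i - x j ∧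
          y i - x j ≤ Mup i - xl j - delta i j) ∧
        (∀ i₁ i₂, Lo i₁ i₂ ≤ y i₁ + y i₂ ∧ y i₁ + y i₂ ≤ Gam i₁ i₂) ∧
        (∀ i j, mlow i + xl j + gam i j ≤ y i + x j ∧
          y i + x j ≤ Mup i + xu j - gam i j)) ∧
          z = Sum.elim (Sum.elim x y) (Sum.elim (fun j => -x j) (fun i => -y i))}
      = {z : ((Fin m ⊕ Fin n) ⊕ (Fin m ⊕ Fin n)) → ℝ |
            ∀ t : Fin m ⊕ Fin n, z (Sum.inl t) + z (Sum.inr t) = 0}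
        ∩ tconv (octGens m n xl xu mlow Mup Delta Gam Lo delta gam) := by
  classical
  ext z
  constructor
  · rintro ⟨x, y, ⟨hx, hy, hD, hdx, hLG, hgx⟩, rfl⟩
    refine ⟨?_, ?_⟩
    · rintro (j|i) <;> simp
    classical
    refine ⟨fun k => match k with
      | none => 0
      | some (.inl (.inl k)) => x k - xu k
      | some (.inl (.inr k)) => xl k - x k
      | some (.inr (.inl l)) => y l - Mup l
      | some (.inr (.inr l)) => mlow l - y l, ?_, ⟨none, rfl⟩, ?_⟩
    · rintro (_|((k|k)|(l|l)))
      · exact le_refl 0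
      · have := (hx k).2; simpa using by linarith
      · have := (hx k).1; simpa using by linarith
      · have := (hy l).2; simpa using by linarith
      · have := (hy l).1; simpa using by linarith
    · intro t
      constructor
      · rcases t with (j|i)|(j|i)
        · exact ⟨some (.inl (.inl j)), by simp [octGens]⟩
        · exact ⟨some (.inr (.inl i)), by simp [octGens]⟩
        · refine ⟨some (.inl (.inr j)), ?_⟩; simp [octGens]; ring
        · refine ⟨some (.inr (.inr i)), ?_⟩; simp [octGens]; ring
      · rintro v ⟨k, rfl⟩
        rcases k with _|((k|k)|(l|l)) <;> rcases t with (j|i)|(j|i) <;>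
          simp only [octGens, Sum.elim_inl, Sum.elim_inr, zero_add]
        · exact (hx j).1
        · exact (hy i).1
        · simp only [neg_le_neg_iff]; exact (hx j).2
        · simp only [neg_le_neg_iff]; exact (hy i).2
        · by_cases hjk : j = k
          · rw [if_pos hjk, hjk]; linarith
          · rw [if_neg hjk]; have := (hx k).2; have := (hx j).1; linarith
        · have := (hdx i k).1; linarith
        · have := (hx k).2; have := (hx j).2; linarith
        · have := (hgx i k).2; linarith
        · have := (hx k).1; have := (hx j).1; linarith
        · have := (hgx i k).1; linarith
        · by_cases hjk : j = k
          · rw [if_pos hjk, hjk]; linarith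
          · rw [if_neg hjk]; have := (hx k).1; have := (hx j).2; linarith
        · have := (hdx i k).2; linarith
        · have := (hdx l j).2; linarith
        · by_cases hil : i = l
          · rw [if_pos hil, hil]; linarith
          · rw [if_neg hil]; have := hD l i; linarith
        · have := (hgx l j).2; linarith
        · by_cases hil : i = l
          · rw [if_pos hil, hil]; have := (hy l).2; linarith
          · rw [if_neg hil]; have := (hLG l i).2; linarith
        · have := (hgx l j).1; linarith
        · by_cases hil : i = l
          · rw [if_pos hil, hil]; have := (hy l).1; linarith
          · rw [if_neg hil]; have := (hLG l i).1; linarith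
        · have := (hdx l j).1; linarith
        · by_cases hil : i = l
          · rw [if_pos hil, hil]; linarith
          · rw [if_neg hil]; have := hD i l; linarith
  have F6 : ∀ i j, delta i j ≤ xu j - xl j := by
    intro i j; rw [hdelta i j]
    have := OctPW.L2 (a := w i j) (hbounds j); simp only [OctPW.dlt] at this; linarith
  have F7 : ∀ i j, gam i j ≤ xu j - xl j := by
    intro i j; rw [hgam i j]
    have := OctPW.L4 (a := w i j) (hbounds j); simp only [OctPW.gmt] at this; linarith
  have F8 : ∀ i j, 0 ≤ delta i j := by
    intro i j; rw [hdelta i j]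
    have := OctPW.L1 (a := w i j) (hbounds j); simp only [OctPW.dlt] at this; linarith
  have F9 : ∀ i j, 0 ≤ gam i j := by
    intro i j; rw [hgam i j]
    have := OctPW.L3 (a := w i j) (hbounds j); simp only [OctPW.gmt] at this; linarith
  have F53 : ∀ i j, delta i j + gam i j ≤ xu j - xl j := by
    intro i j; rw [hdelta i j, hgam i j]
    have := OctPW.L45 (a := w i j) (hbounds j)
    simp only [OctPW.dlt, OctPW.gmt] at this; linarith
  have F1 : ∀ i, mlow i ≤ Mup i := by
    intro i
    have h := Finset.sum_le_sum (s := Finset.univ)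
      (f := fun j => OctPW.mnt (w i j) (xl j) (xu j))
      (g := fun j => OctPW.mxt (w i j) (xl j) (xu j))
      (fun j _ => OctPW.L5 (hbounds j))
    simp only [OctPW.mnt, OctPW.mxt, OctPW.dlt, OctPW.gmt, OctPW.mdt, OctPW.mst, OctPW.mSt] at h
    rw [hmlow i, hMup i]
    linarith
  have F10 : ∀ i i', Mup i ≤ Mup i' + Delta i i' := by
    intro i i'
    have h := Finset.sum_le_sum (s := Finset.univ)
      (f := fun j => OctPW.mxt (w i j) (xl j) (xu j))
      (g := fun j => OctPW.mxt (w i' j) (xl j) (xu j) + OctPW.mdt (w i j) (w i' j) (xl j) (xu j))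
      (fun j _ => OctPW.L8 (hbounds j))
    rw [Finset.sum_add_distrib] at h
    simp only [OctPW.mnt, OctPW.mxt, OctPW.dlt, OctPW.gmt, OctPW.mdt, OctPW.mst, OctPW.mSt] at h
    rw [hMup i, hMup i', hDelta i i']
    linarith
  have F11 : ∀ i i', mlow i ≤ mlow i' + Delta i i' := by
    intro i i'
    have h := Finset.sum_le_sum (s := Finset.univ)
      (f := fun j => OctPW.mnt (w i j) (xl j) (xu j))
      (g := fun j => OctPW.mnt (w i' j) (xl j) (xu j) + OctPW.mdt (w i j) (w i' j) (xl j) (xu j))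
      (fun j _ => OctPW.L11 (hbounds j))
    rw [Finset.sum_add_distrib] at h
    simp only [OctPW.mnt, OctPW.mxt, OctPW.dlt, OctPW.gmt, OctPW.mdt, OctPW.mst, OctPW.mSt] at h
    rw [hmlow i, hmlow i', hDelta i i']
    linarith
  have F12 : ∀ i i', Lo i i' ≤ mlow i + Mup i' := by
    intro i i'
    have h := Finset.sum_le_sum (s := Finset.univ)
      (f := fun j => OctPW.mst (w i j) (w i' j) (xl j) (xu j))
      (g := fun j => OctPW.mnt (w i j) (xl j) (xu j) + OctPW.mxt (w i' j) (xl j) (xu j))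
      (fun j _ => OctPW.L9 (hbounds j))
    rw [Finset.sum_add_distrib] at h
    simp only [OctPW.mnt, OctPW.mxt, OctPW.dlt, OctPW.gmt, OctPW.mdt, OctPW.mst, OctPW.mSt] at h
    rw [hLo i i', hmlow i, hMup i']
    linarith
  have F13 : ∀ i i', Mup i + mlow i' ≤ Gam i i' := by
    intro i i'
    have h := Finset.sum_le_sum (s := Finset.univ)
      (f := fun j => OctPW.mxt (w i j) (xl j) (xu j) + OctPW.mnt (w i' j) (xl j) (xu j))
      (g := fun j => OctPW.mSt (w i j) (w i' j) (xl j) (xu j))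
      (fun j _ => OctPW.L10 (hbounds j))
    rw [Finset.sum_add_distrib] at h
    simp only [OctPW.mnt, OctPW.mxt, OctPW.dlt, OctPW.gmt, OctPW.mdt, OctPW.mst, OctPW.mSt] at h
    rw [hMup i, hmlow i', hGam i i']
    linarith
  have F28 : ∀ i i', mlow i + Mup i' ≤ Gam i i' := by
    intro i i'
    have h := Finset.sum_le_sum (s := Finset.univ)
      (f := fun j => OctPW.mnt (w i j) (xl j) (xu j) + OctPW.mxt (w i' j) (xl j) (xu j))
      (g := fun j => OctPW.mSt (w i j) (w i' j) (xl j) (xu j))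
      (fun j _ => OctPW.L25 (hbounds j))
    rw [Finset.sum_add_distrib] at h
    simp only [OctPW.mnt, OctPW.mxt, OctPW.dlt, OctPW.gmt, OctPW.mdt, OctPW.mst, OctPW.mSt] at h
    rw [hmlow i, hMup i', hGam i i']
    linarith
  have F38 : ∀ i i', Lo i i' ≤ Mup i + mlow i' := by
    intro i i'
    have h := Finset.sum_le_sum (s := Finset.univ)
      (f := fun j => OctPW.mst (w i j) (w i' j) (xl j) (xu j))
      (g := fun j => OctPW.mxt (w i j) (xl j) (xu j) + OctPW.mnt (w i' j) (xl j) (xu j))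
      (fun j _ => OctPW.L34 (hbounds j))
    rw [Finset.sum_add_distrib] at h
    simp only [OctPW.mnt, OctPW.mxt, OctPW.dlt, OctPW.gmt, OctPW.mdt, OctPW.mst, OctPW.mSt] at h
    rw [hLo i i', hMup i, hmlow i']
    linarith
  have F14 : ∀ i i', (0:ℝ) ≤ Delta i i' + Delta i' i := by
    intro i i'
    have h := Finset.sum_le_sum (s := Finset.univ)
      (f := fun j => (0:ℝ))
      (g := fun j => OctPW.mdt (w i j) (w i' j) (xl j) (xu j) + OctPW.mdt (w i' j) (w i j) (xl j) (xu j))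
      (fun j _ => OctPW.L14 (hbounds j))
    rw [Finset.sum_add_distrib] at h
    rw [Finset.sum_const, smul_zero] at h
    simp only [OctPW.mnt, OctPW.mxt, OctPW.dlt, OctPW.gmt, OctPW.mdt, OctPW.mst, OctPW.mSt] at h
    rw [hDelta i i', hDelta i' i]
    linarith
  have F15 : ∀ i i' i'', Delta i i'' ≤ Delta i i' + Delta i' i'' := by
    intro i i' i''
    have h := Finset.sum_le_sum (s := Finset.univ)
      (f := fun j => OctPW.mdt (w i j) (w i'' j) (xl j) (xu j))
      (g := fun j => OctPW.mdt (w i j) (w i' j) (xl j) (xu j) + OctPW.mdt (w i' j) (w i'' j) (xl j) (xu j))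
      (fun j _ => OctPW.L15 (hbounds j))
    rw [Finset.sum_add_distrib] at h
    simp only [OctPW.mnt, OctPW.mxt, OctPW.dlt, OctPW.gmt, OctPW.mdt, OctPW.mst, OctPW.mSt] at h
    rw [hDelta i i'', hDelta i i', hDelta i' i'']
    linarith
  have F16 : ∀ i i', 2*mlow i ≤ Lo i i' + Delta i i' := by
    intro i i'
    have h := Finset.sum_le_sum (s := Finset.univ)
      (f := fun j => 2 * OctPW.mnt (w i j) (xl j) (xu j))
      (g := fun j => OctPW.mst (w i j) (w i' j) (xl j) (xu j) + OctPW.mdt (w i j) (w i' j) (xl j) (xu j))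
      (fun j _ => OctPW.L16 (hbounds j))
    rw [Finset.sum_add_distrib] at h
    rw [← Finset.mul_sum] at h
    simp only [OctPW.mnt, OctPW.mxt, OctPW.dlt, OctPW.gmt, OctPW.mdt, OctPW.mst, OctPW.mSt] at h
    rw [hmlow i, hLo i i', hDelta i i']
    linarith
  have F17 : ∀ i i', Lo i i' ≤ 2*mlow i + Delta i' i := by
    intro i i'
    have h := Finset.sum_le_sum (s := Finset.univ)
      (f := fun j => OctPW.mst (w i j) (w i' j) (xl j) (xu j))
      (g := fun j => 2 * OctPW.mnt (w i j) (xl j) (xu j) + OctPW.mdt (w i' j) (w i j) (xl j) (xu j))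
      (fun j _ => OctPW.L17 (hbounds j))
    rw [Finset.sum_add_distrib] at h
    rw [← Finset.mul_sum] at h
    simp only [OctPW.mnt, OctPW.mxt, OctPW.dlt, OctPW.gmt, OctPW.mdt, OctPW.mst, OctPW.mSt] at h
    rw [hLo i i', hmlow i, hDelta i' i]
    linarith
  have F45 : ∀ i i', Lo i i' ≤ 2*mlow i' + Delta i i' := by
    intro i i'
    have h := Finset.sum_le_sum (s := Finset.univ)
      (f := fun j => OctPW.mst (w i j) (w i' j) (xl j) (xu j))
      (g := fun j => 2 * OctPW.mnt (w i' j) (xl j) (xu j) + OctPW.mdt (w i j) (w i' j) (xl j) (xu j))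
      (fun j _ => OctPW.L17b (hbounds j))
    rw [Finset.sum_add_distrib] at h
    rw [← Finset.mul_sum] at h
    simp only [OctPW.mnt, OctPW.mxt, OctPW.dlt, OctPW.gmt, OctPW.mdt, OctPW.mst, OctPW.mSt] at h
    rw [hLo i i', hmlow i', hDelta i i']
    linarith
  have F18 : ∀ i i' i'', Lo i i' ≤ Lo i i'' + Delta i' i'' := by
    intro i i' i''
    have h := Finset.sum_le_sum (s := Finset.univ)
      (f := fun j => OctPW.mst (w i j) (w i' j) (xl j) (xu j))
      (g := fun j => OctPW.mst (w i j) (w i'' j) (xl j) (xu j) + OctPW.mdt (w i' j) (w i'' j) (xl j) (xu j))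
      (fun j _ => OctPW.L18 (hbounds j))
    rw [Finset.sum_add_distrib] at h
    simp only [OctPW.mnt, OctPW.mxt, OctPW.dlt, OctPW.gmt, OctPW.mdt, OctPW.mst, OctPW.mSt] at h
    rw [hLo i i', hLo i i'', hDelta i' i'']
    linarith
  have F31 : ∀ i, 2*Mup i ≤ Gam i i := by
    intro i
    have h := Finset.sum_le_sum (s := Finset.univ)
      (f := fun j => 2 * OctPW.mxt (w i j) (xl j) (xu j))
      (g := fun j => OctPW.mSt (w i j) (w i j) (xl j) (xu j))
      (fun j _ => (OctPW.L28 (hbounds j)).ge)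
    rw [← Finset.mul_sum] at h
    simp only [OctPW.mnt, OctPW.mxt, OctPW.dlt, OctPW.gmt, OctPW.mdt, OctPW.mst, OctPW.mSt] at h
    rw [hMup i, hGam i i]
    linarith
  have F35 : ∀ i, Lo i i ≤ 2*mlow i := by
    intro i
    have h := Finset.sum_le_sum (s := Finset.univ)
      (f := fun j => OctPW.mst (w i j) (w i j) (xl j) (xu j))
      (g := fun j => 2 * OctPW.mnt (w i j) (xl j) (xu j))
      (fun j _ => (OctPW.L31 (hbounds j)).le)
    rw [← Finset.mul_sum] at h
    simp only [OctPW.mnt, OctPW.mxt, OctPW.dlt, OctPW.gmt, OctPW.mdt, OctPW.mst, OctPW.mSt] at h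
    rw [hLo i i, hmlow i]
    linarith
  have F32 : ∀ l i, 2*Mup l ≤ Delta l i + Gam i l := by
    intro l i
    have h := Finset.sum_le_sum (s := Finset.univ)
      (f := fun j => 2 * OctPW.mxt (w l j) (xl j) (xu j))
      (g := fun j => OctPW.mdt (w l j) (w i j) (xl j) (xu j) + OctPW.mSt (w i j) (w l j) (xl j) (xu j))
      (fun j _ => OctPW.L29 (hbounds j))
    rw [Finset.sum_add_distrib] at h
    rw [← Finset.mul_sum] at h
    simp only [OctPW.mnt, OctPW.mxt, OctPW.dlt, OctPW.gmt, OctPW.mdt, OctPW.mst, OctPW.mSt] at h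
    rw [hMup l, hDelta l i, hGam i l]
    linarith
  have F33 : ∀ l i1 i2, Gam l i2 ≤ Delta l i1 + Gam i1 i2 := by
    intro l i1 i2
    have h := Finset.sum_le_sum (s := Finset.univ)
      (f := fun j => OctPW.mSt (w l j) (w i2 j) (xl j) (xu j))
      (g := fun j => OctPW.mdt (w l j) (w i1 j) (xl j) (xu j) + OctPW.mSt (w i1 j) (w i2 j) (xl j) (xu j))
      (fun j _ => OctPW.L30 (hbounds j))
    rw [Finset.sum_add_distrib] at h
    simp only [OctPW.mnt, OctPW.mxt, OctPW.dlt, OctPW.gmt, OctPW.mdt, OctPW.mst, OctPW.mSt] at h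
    rw [hGam l i2, hDelta l i1, hGam i1 i2]
    linarith
  have F36 : ∀ l i, 2*mlow l + Delta i l ≤ Gam l i := by
    intro l i
    have h := Finset.sum_le_sum (s := Finset.univ)
      (f := fun j => 2 * OctPW.mnt (w l j) (xl j) (xu j) + OctPW.mdt (w i j) (w l j) (xl j) (xu j))
      (g := fun j => OctPW.mSt (w l j) (w i j) (xl j) (xu j))
      (fun j _ => OctPW.L32 (hbounds j))
    rw [Finset.sum_add_distrib] at h
    rw [← Finset.mul_sum] at h
    simp only [OctPW.mnt, OctPW.mxt, OctPW.dlt, OctPW.gmt, OctPW.mdt, OctPW.mst, OctPW.mSt] at h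
    rw [hmlow l, hDelta i l, hGam l i]
    linarith
  have F37 : ∀ l i1 i2, Lo l i1 + Delta i2 l ≤ Gam i1 i2 := by
    intro l i1 i2
    have h := Finset.sum_le_sum (s := Finset.univ)
      (f := fun j => OctPW.mst (w l j) (w i1 j) (xl j) (xu j) + OctPW.mdt (w i2 j) (w l j) (xl j) (xu j))
      (g := fun j => OctPW.mSt (w i1 j) (w i2 j) (xl j) (xu j))
      (fun j _ => OctPW.L38 (hbounds j))
    rw [Finset.sum_add_distrib] at h
    simp only [OctPW.mnt, OctPW.mxt, OctPW.dlt, OctPW.gmt, OctPW.mdt, OctPW.mst, OctPW.mSt] at h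
    rw [hLo l i1, hDelta i2 l, hGam i1 i2]
    linarith
  have Flg : ∀ p q, Lo p q ≤ Gam q p := by
    intro p q
    have h := Finset.sum_le_sum (s := Finset.univ)
      (f := fun j => OctPW.mst (w p j) (w q j) (xl j) (xu j))
      (g := fun j => OctPW.mSt (w q j) (w p j) (xl j) (xu j))
      (fun j _ => OctPW.L33 (hbounds j))
    simp only [OctPW.mnt, OctPW.mxt, OctPW.dlt, OctPW.gmt, OctPW.mdt, OctPW.mst, OctPW.mSt] at h
    rw [hLo p q, hGam q p]
    linarith
  have F42 : ∀ l i, Lo l i + Delta l i ≤ 2*Mup l := by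
    intro l i
    have h := Finset.sum_le_sum (s := Finset.univ)
      (f := fun j => OctPW.mst (w l j) (w i j) (xl j) (xu j) + OctPW.mdt (w l j) (w i j) (xl j) (xu j))
      (g := fun j => 2 * OctPW.mxt (w l j) (xl j) (xu j))
      (fun j _ => OctPW.L37 (hbounds j))
    rw [Finset.sum_add_distrib] at h
    rw [← Finset.mul_sum] at h
    simp only [OctPW.mnt, OctPW.mxt, OctPW.dlt, OctPW.gmt, OctPW.mdt, OctPW.mst, OctPW.mSt] at h
    rw [hLo l i, hDelta l i, hMup l]
    linarith
  have F44 : ∀ l i1 i2, Lo i1 i2 + Delta l i2 ≤ Gam l i1 := by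
    intro l i1 i2
    have h := Finset.sum_le_sum (s := Finset.univ)
      (f := fun j => OctPW.mst (w i1 j) (w i2 j) (xl j) (xu j) + OctPW.mdt (w l j) (w i2 j) (xl j) (xu j))
      (g := fun j => OctPW.mSt (w l j) (w i1 j) (xl j) (xu j))
      (fun j _ => OctPW.L44 (hbounds j))
    rw [Finset.sum_add_distrib] at h
    simp only [OctPW.mnt, OctPW.mxt, OctPW.dlt, OctPW.gmt, OctPW.mdt, OctPW.mst, OctPW.mSt] at h
    rw [hLo i1 i2, hDelta l i2, hGam l i1]
    linarith
  have F46 : ∀ l i1 i2, Lo i1 i2 ≤ Delta i1 l + Lo l i2 := by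
    intro l i1 i2
    have h := Finset.sum_le_sum (s := Finset.univ)
      (f := fun j => OctPW.mst (w i1 j) (w i2 j) (xl j) (xu j))
      (g := fun j => OctPW.mdt (w i1 j) (w l j) (xl j) (xu j) + OctPW.mst (w l j) (w i2 j) (xl j) (xu j))
      (fun j _ => OctPW.L39 (hbounds j))
    rw [Finset.sum_add_distrib] at h
    simp only [OctPW.mnt, OctPW.mxt, OctPW.dlt, OctPW.gmt, OctPW.mdt, OctPW.mst, OctPW.mSt] at h
    rw [hLo i1 i2, hDelta i1 l, hLo l i2]
    linarith
  have F52 : ∀ i k, mlow i + delta i k + gam i k ≤ Mup i := by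
    intro i k
    have h := OctPW.sum_with (f := fun j => OctPW.mnt (w i j) (xl j) (xu j)) (g := fun j => OctPW.mxt (w i j) (xl j) (xu j)) k
      (OctPW.dlt (w i k) (xl k) (xu k) + OctPW.gmt (w i k) (xl k) (xu k))
      (by have := OctPW.L6 (a := w i k) (hbounds k); linarith) (fun j => OctPW.L5 (hbounds j))
    simp only [OctPW.mnt, OctPW.mxt, OctPW.dlt, OctPW.gmt, OctPW.mdt, OctPW.mst, OctPW.mSt] at h
    rw [hmlow i, hMup i, hdelta i k, hgam i k]
    linarith
  have F2 : ∀ i k, mlow i + delta i k ≤ Mup i := by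
    intro i k; have := F52 i k; have := F9 i k; linarith
  have F3 : ∀ i k, mlow i + gam i k ≤ Mup i := by
    intro i k; have := F52 i k; have := F8 i k; linarith
  have F19 : ∀ i1 i2 k, mlow i1 + delta i1 k ≤ mlow i2 + delta i2 k + Delta i1 i2 := by
    intro i1 i2 k
    have h := OctPW.sum_with (f := fun j => OctPW.mnt (w i1 j) (xl j) (xu j)) (g := fun j => OctPW.mnt (w i2 j) (xl j) (xu j) + OctPW.mdt (w i1 j) (w i2 j) (xl j) (xu j)) k
      (OctPW.dlt (w i1 k) (xl k) (xu k) - OctPW.dlt (w i2 k) (xl k) (xu k))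
      (by have := OctPW.L12 (a := w i1 k) (c := w i2 k) (hbounds k); linarith) (fun j => OctPW.L11 (hbounds j))
    rw [Finset.sum_add_distrib] at h
    simp only [OctPW.mnt, OctPW.mxt, OctPW.dlt, OctPW.gmt, OctPW.mdt, OctPW.mst, OctPW.mSt] at h
    rw [hmlow i1, hmlow i2, hDelta i1 i2, hdelta i1 k, hdelta i2 k]
    linarith
  have F20 : ∀ i1 i2 k, mlow i1 + gam i1 k ≤ mlow i2 + gam i2 k + Delta i1 i2 := by
    intro i1 i2 k
    have h := OctPW.sum_with (f := fun j => OctPW.mnt (w i1 j) (xl j) (xu j)) (g := fun j => OctPW.mnt (w i2 j) (xl j) (xu j) + OctPW.mdt (w i1 j) (w i2 j) (xl j) (xu j)) k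
      (OctPW.gmt (w i1 k) (xl k) (xu k) - OctPW.gmt (w i2 k) (xl k) (xu k))
      (by have := OctPW.L13 (a := w i1 k) (c := w i2 k) (hbounds k); linarith) (fun j => OctPW.L11 (hbounds j))
    rw [Finset.sum_add_distrib] at h
    simp only [OctPW.mnt, OctPW.mxt, OctPW.dlt, OctPW.gmt, OctPW.mdt, OctPW.mst, OctPW.mSt] at h
    rw [hmlow i1, hmlow i2, hDelta i1 i2, hgam i1 k, hgam i2 k]
    linarith
  have F24 : ∀ l i j0, Mup l + delta i j0 ≤ Mup i + delta l j0 + Delta l i := by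
    intro l i j0
    have h := OctPW.sum_with (f := fun j => OctPW.mxt (w l j) (xl j) (xu j)) (g := fun j => OctPW.mxt (w i j) (xl j) (xu j) + OctPW.mdt (w l j) (w i j) (xl j) (xu j)) j0
      (OctPW.dlt (w i j0) (xl j0) (xu j0) - OctPW.dlt (w l j0) (xl j0) (xu j0))
      (by have := OctPW.L19 (a := w l j0) (c := w i j0) (hbounds j0); linarith) (fun j => OctPW.L8 (hbounds j))
    rw [Finset.sum_add_distrib] at h
    simp only [OctPW.mnt, OctPW.mxt, OctPW.dlt, OctPW.gmt, OctPW.mdt, OctPW.mst, OctPW.mSt] at h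
    rw [hMup l, hMup i, hDelta l i, hdelta i j0, hdelta l j0]
    linarith
  have F47 : ∀ l i j0, Mup l + gam i j0 ≤ Mup i + gam l j0 + Delta l i := by
    intro l i j0
    have h := OctPW.sum_with (f := fun j => OctPW.mxt (w l j) (xl j) (xu j)) (g := fun j => OctPW.mxt (w i j) (xl j) (xu j) + OctPW.mdt (w l j) (w i j) (xl j) (xu j)) j0
      (OctPW.gmt (w i j0) (xl j0) (xu j0) - OctPW.gmt (w l j0) (xl j0) (xu j0))
      (by have := OctPW.L40 (a := w l j0) (c := w i j0) (hbounds j0); linarith) (fun j => OctPW.L8 (hbounds j))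
    rw [Finset.sum_add_distrib] at h
    simp only [OctPW.mnt, OctPW.mxt, OctPW.dlt, OctPW.gmt, OctPW.mdt, OctPW.mst, OctPW.mSt] at h
    rw [hMup l, hMup i, hDelta l i, hgam i j0, hgam l j0]
    linarith
  have F25 : ∀ l i j0, Lo l i + delta i j0 ≤ mlow l + Mup i + gam l j0 := by
    intro l i j0
    have h := OctPW.sum_with (f := fun j => OctPW.mst (w l j) (w i j) (xl j) (xu j)) (g := fun j => OctPW.mnt (w l j) (xl j) (xu j) + OctPW.mxt (w i j) (xl j) (xu j)) j0
      (OctPW.dlt (w i j0) (xl j0) (xu j0) - OctPW.gmt (w l j0) (xl j0) (xu j0))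
      (by have := OctPW.L20 (a := w l j0) (c := w i j0) (hbounds j0); linarith) (fun j => OctPW.L9 (hbounds j))
    rw [Finset.sum_add_distrib] at h
    simp only [OctPW.mnt, OctPW.mxt, OctPW.dlt, OctPW.gmt, OctPW.mdt, OctPW.mst, OctPW.mSt] at h
    rw [hLo l i, hmlow l, hMup i, hdelta i j0, hgam l j0]
    linarith
  have F48 : ∀ l i j0, Lo l i + gam i j0 ≤ mlow l + Mup i + delta l j0 := by
    intro l i j0
    have h := OctPW.sum_with (f := fun j => OctPW.mst (w l j) (w i j) (xl j) (xu j)) (g := fun j => OctPW.mnt (w l j) (xl j) (xu j) + OctPW.mxt (w i j) (xl j) (xu j)) j0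
      (OctPW.gmt (w i j0) (xl j0) (xu j0) - OctPW.dlt (w l j0) (xl j0) (xu j0))
      (by have := OctPW.L41 (a := w l j0) (c := w i j0) (hbounds j0); linarith) (fun j => OctPW.L9 (hbounds j))
    rw [Finset.sum_add_distrib] at h
    simp only [OctPW.mnt, OctPW.mxt, OctPW.dlt, OctPW.gmt, OctPW.mdt, OctPW.mst, OctPW.mSt] at h
    rw [hLo l i, hmlow l, hMup i, hgam i j0, hdelta l j0]
    linarith
  have F26 : ∀ l i j0, Delta l i + mlow i + delta l j0 + delta i j0 ≤ Mup l + (xu j0 - xl j0) := by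
    intro l i j0
    have h := OctPW.sum_with (f := fun j => OctPW.mdt (w l j) (w i j) (xl j) (xu j)) (g := fun j => OctPW.mxt (w l j) (xl j) (xu j) - OctPW.mnt (w i j) (xl j) (xu j)) j0
      (OctPW.dlt (w l j0) (xl j0) (xu j0) + OctPW.dlt (w i j0) (xl j0) (xu j0) - (xu j0 - xl j0))
      (by have := OctPW.L22 (a := w l j0) (c := w i j0) (hbounds j0); linarith) (fun j => OctPW.L21 (hbounds j))
    rw [Finset.sum_sub_distrib] at h
    simp only [OctPW.mnt, OctPW.mxt, OctPW.dlt, OctPW.gmt, OctPW.mdt, OctPW.mst, OctPW.mSt] at h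
    rw [hDelta l i, hmlow i, hdelta l j0, hdelta i j0, hMup l]
    linarith
  have F49 : ∀ l i j0, Delta l i + mlow i + gam l j0 + gam i j0 ≤ Mup l + (xu j0 - xl j0) := by
    intro l i j0
    have h := OctPW.sum_with (f := fun j => OctPW.mdt (w l j) (w i j) (xl j) (xu j)) (g := fun j => OctPW.mxt (w l j) (xl j) (xu j) - OctPW.mnt (w i j) (xl j) (xu j)) j0
      (OctPW.gmt (w l j0) (xl j0) (xu j0) + OctPW.gmt (w i j0) (xl j0) (xu j0) - (xu j0 - xl j0))
      (by have := OctPW.L42 (a := w l j0) (c := w i j0) (hbounds j0); linarith) (fun j => OctPW.L21 (hbounds j))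
    rw [Finset.sum_sub_distrib] at h
    simp only [OctPW.mnt, OctPW.mxt, OctPW.dlt, OctPW.gmt, OctPW.mdt, OctPW.mst, OctPW.mSt] at h
    rw [hDelta l i, hmlow i, hgam l j0, hgam i j0, hMup l]
    linarith
  have F27 : ∀ l i j0, mlow l + mlow i + gam l j0 + delta i j0 ≤ Lo l i + (xu j0 - xl j0) := by
    intro l i j0
    have h := OctPW.sum_with (f := fun j => OctPW.mnt (w l j) (xl j) (xu j) + OctPW.mnt (w i j) (xl j) (xu j)) (g := fun j => OctPW.mst (w l j) (w i j) (xl j) (xu j)) j0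
      (OctPW.gmt (w l j0) (xl j0) (xu j0) + OctPW.dlt (w i j0) (xl j0) (xu j0) - (xu j0 - xl j0))
      (by have := OctPW.L24 (a := w l j0) (c := w i j0) (hbounds j0); linarith) (fun j => OctPW.L23 (hbounds j))
    rw [Finset.sum_add_distrib] at h
    simp only [OctPW.mnt, OctPW.mxt, OctPW.dlt, OctPW.gmt, OctPW.mdt, OctPW.mst, OctPW.mSt] at h
    rw [hmlow l, hmlow i, hgam l j0, hdelta i j0, hLo l i]
    linarith
  have F50 : ∀ l i j0, mlow l + mlow i + delta l j0 + gam i j0 ≤ Lo l i + (xu j0 - xl j0) := by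
    intro l i j0
    have h := OctPW.sum_with (f := fun j => OctPW.mnt (w l j) (xl j) (xu j) + OctPW.mnt (w i j) (xl j) (xu j)) (g := fun j => OctPW.mst (w l j) (w i j) (xl j) (xu j)) j0
      (OctPW.dlt (w l j0) (xl j0) (xu j0) + OctPW.gmt (w i j0) (xl j0) (xu j0) - (xu j0 - xl j0))
      (by have := OctPW.L43 (a := w l j0) (c := w i j0) (hbounds j0); linarith) (fun j => OctPW.L23 (hbounds j))
    rw [Finset.sum_add_distrib] at h
    simp only [OctPW.mnt, OctPW.mxt, OctPW.dlt, OctPW.gmt, OctPW.mdt, OctPW.mst, OctPW.mSt] at h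
    rw [hmlow l, hmlow i, hdelta l j0, hgam i j0, hLo l i]
    linarith
  have F29 : ∀ i1 i2 k, mlow i1 + delta i1 k + Mup i2 ≤ Gam i1 i2 + gam i2 k := by
    intro i1 i2 k
    have h := OctPW.sum_with (f := fun j => OctPW.mnt (w i1 j) (xl j) (xu j) + OctPW.mxt (w i2 j) (xl j) (xu j)) (g := fun j => OctPW.mSt (w i1 j) (w i2 j) (xl j) (xu j)) k
      (OctPW.dlt (w i1 k) (xl k) (xu k) - OctPW.gmt (w i2 k) (xl k) (xu k))
      (by have := OctPW.L26 (a := w i1 k) (c := w i2 k) (hbounds k); linarith) (fun j => OctPW.L25 (hbounds j))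
    rw [Finset.sum_add_distrib] at h
    simp only [OctPW.mnt, OctPW.mxt, OctPW.dlt, OctPW.gmt, OctPW.mdt, OctPW.mst, OctPW.mSt] at h
    rw [hmlow i1, hdelta i1 k, hMup i2, hGam i1 i2, hgam i2 k]
    linarith
  have F30 : ∀ i1 i2 k, mlow i1 + gam i1 k + Mup i2 ≤ Gam i1 i2 + delta i2 k := by
    intro i1 i2 k
    have h := OctPW.sum_with (f := fun j => OctPW.mnt (w i1 j) (xl j) (xu j) + OctPW.mxt (w i2 j) (xl j) (xu j)) (g := fun j => OctPW.mSt (w i1 j) (w i2 j) (xl j) (xu j)) k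
      (OctPW.gmt (w i1 k) (xl k) (xu k) - OctPW.dlt (w i2 k) (xl k) (xu k))
      (by have := OctPW.L27 (a := w i1 k) (c := w i2 k) (hbounds k); linarith) (fun j => OctPW.L25 (hbounds j))
    rw [Finset.sum_add_distrib] at h
    simp only [OctPW.mnt, OctPW.mxt, OctPW.dlt, OctPW.gmt, OctPW.mdt, OctPW.mst, OctPW.mSt] at h
    rw [hmlow i1, hgam i1 k, hMup i2, hGam i1 i2, hdelta i2 k]
    linarith
  have F39 : ∀ i1 i2 k, Lo i1 i2 + gam i1 k ≤ Mup i1 + mlow i2 + delta i2 k := by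
    intro i1 i2 k
    have h := OctPW.sum_with (f := fun j => OctPW.mst (w i1 j) (w i2 j) (xl j) (xu j)) (g := fun j => OctPW.mxt (w i1 j) (xl j) (xu j) + OctPW.mnt (w i2 j) (xl j) (xu j)) k
      (OctPW.gmt (w i1 k) (xl k) (xu k) - OctPW.dlt (w i2 k) (xl k) (xu k))
      (by have := OctPW.L35 (a := w i1 k) (c := w i2 k) (hbounds k); linarith) (fun j => OctPW.L34 (hbounds j))
    rw [Finset.sum_add_distrib] at h
    simp only [OctPW.mnt, OctPW.mxt, OctPW.dlt, OctPW.gmt, OctPW.mdt, OctPW.mst, OctPW.mSt] at h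
    rw [hLo i1 i2, hgam i1 k, hMup i1, hmlow i2, hdelta i2 k]
    linarith
  have F40f : ∀ i1 i2 k, Lo i1 i2 + delta i1 k ≤ Mup i1 + mlow i2 + gam i2 k := by
    intro i1 i2 k
    have h := OctPW.sum_with (f := fun j => OctPW.mst (w i1 j) (w i2 j) (xl j) (xu j)) (g := fun j => OctPW.mxt (w i1 j) (xl j) (xu j) + OctPW.mnt (w i2 j) (xl j) (xu j)) k
      (OctPW.dlt (w i1 k) (xl k) (xu k) - OctPW.gmt (w i2 k) (xl k) (xu k))
      (by have := OctPW.L36 (a := w i1 k) (c := w i2 k) (hbounds k); linarith) (fun j => OctPW.L34 (hbounds j))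
    rw [Finset.sum_add_distrib] at h
    simp only [OctPW.mnt, OctPW.mxt, OctPW.dlt, OctPW.gmt, OctPW.mdt, OctPW.mst, OctPW.mSt] at h
    rw [hLo i1 i2, hdelta i1 k, hMup i1, hmlow i2, hgam i2 k]
    linarith
  have F4 : ∀ i j0 k, j0 ≠ k → mlow i + delta i j0 + delta i k ≤ Mup i := by
    intro i j0 k hjk
    have h := OctPW.sum_with2 (f := fun j => OctPW.mnt (w i j) (xl j) (xu j)) (g := fun j => OctPW.mxt (w i j) (xl j) (xu j)) j0 k
      (OctPW.dlt (w i j0) (xl j0) (xu j0)) (OctPW.dlt (w i k) (xl k) (xu k)) hjk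
      (by have := OctPW.L6 (a := w i j0) (hbounds j0); have := OctPW.L3 (a := w i j0) (hbounds j0); linarith) (by have := OctPW.L6 (a := w i k) (hbounds k); have := OctPW.L3 (a := w i k) (hbounds k); linarith) (fun j => OctPW.L5 (hbounds j))
    simp only [OctPW.mnt, OctPW.mxt, OctPW.dlt, OctPW.gmt, OctPW.mdt, OctPW.mst, OctPW.mSt] at h
    rw [hmlow i, hdelta i j0, hdelta i k, hMup i]
    linarith
  have F5 : ∀ i j0 k, j0 ≠ k → mlow i + delta i j0 + gam i k ≤ Mup i := by
    intro i j0 k hjk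
    have h := OctPW.sum_with2 (f := fun j => OctPW.mnt (w i j) (xl j) (xu j)) (g := fun j => OctPW.mxt (w i j) (xl j) (xu j)) j0 k
      (OctPW.dlt (w i j0) (xl j0) (xu j0)) (OctPW.gmt (w i k) (xl k) (xu k)) hjk
      (by have := OctPW.L6 (a := w i j0) (hbounds j0); have := OctPW.L3 (a := w i j0) (hbounds j0); linarith) (by have := OctPW.L6 (a := w i k) (hbounds k); have := OctPW.L1 (a := w i k) (hbounds k); linarith) (fun j => OctPW.L5 (hbounds j))
    simp only [OctPW.mnt, OctPW.mxt, OctPW.dlt, OctPW.gmt, OctPW.mdt, OctPW.mst, OctPW.mSt] at h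
    rw [hmlow i, hdelta i j0, hgam i k, hMup i]
    linarith
  have F51 : ∀ i j0 k, j0 ≠ k → mlow i + gam i j0 + gam i k ≤ Mup i := by
    intro i j0 k hjk
    have h := OctPW.sum_with2 (f := fun j => OctPW.mnt (w i j) (xl j) (xu j)) (g := fun j => OctPW.mxt (w i j) (xl j) (xu j)) j0 k
      (OctPW.gmt (w i j0) (xl j0) (xu j0)) (OctPW.gmt (w i k) (xl k) (xu k)) hjk
      (by have := OctPW.L6 (a := w i j0) (hbounds j0); have := OctPW.L1 (a := w i j0) (hbounds j0); linarith) (by have := OctPW.L6 (a := w i k) (hbounds k); have := OctPW.L1 (a := w i k) (hbounds k); linarith) (fun j => OctPW.L5 (hbounds j))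
    simp only [OctPW.mnt, OctPW.mxt, OctPW.dlt, OctPW.gmt, OctPW.mdt, OctPW.mst, OctPW.mSt] at h
    rw [hmlow i, hgam i j0, hgam i k, hMup i]
    linarith
  intro hz
  obtain ⟨hman, lam, hlam, -, hgr⟩ := hz
  have hub : ∀ k t, lam k + octGens m n xl xu mlow Mup Delta Gam Lo delta gam k t ≤ z t :=
    fun k t => (hgr t).2 ⟨k, rfl⟩
  have key : ∀ t1 t2 c, (∀ k, octGens m n xl xu mlow Mup Delta Gam Lo delta gam k t1 ≤
      octGens m n xl xu mlow Mup Delta Gam Lo delta gam k t2 + c) → z t1 ≤ z t2 + c := by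
    intro t1 t2 c hc
    obtain ⟨k, hk⟩ := (hgr t1).1
    have hk' : lam k + octGens m n xl xu mlow Mup Delta Gam Lo delta gam k t1 = z t1 := hk
    have h1 := hub k t2
    have h2 := hc k
    linarith
  have keyu : ∀ t c, (∀ k, octGens m n xl xu mlow Mup Delta Gam Lo delta gam k t ≤ c) →
      z t ≤ c := by
    intro t c hc
    obtain ⟨k, hk⟩ := (hgr t).1
    have hk' : lam k + octGens m n xl xu mlow Mup Delta Gam Lo delta gam k t = z t := hk
    have h1 := hlam k
    have h2 := hc k
    linarith
  have hneg2 : ∀ t, z (Sum.inr t) = -z (Sum.inl t) := fun t => by have := hman t; linarith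
  have C1 : ∀ j, z (Sum.inl (Sum.inl j)) ≤ xu j := by
    intro j
    refine keyu _ _ ?_
    rintro (_|((k|k)|(l|l))) <;> simp only [octGens, Sum.elim_inl, Sum.elim_inr]
    · exact hbounds j
    · by_cases hjk : j = k
      · rw [if_pos hjk, hjk]
      · rw [if_neg hjk]; exact hbounds j
    · exact hbounds j
    · have := F6 l j; linarith
    · have := F7 l j; linarith
  have C2 : ∀ j, z (Sum.inr (Sum.inl j)) ≤ -xl j := by
    intro j
    refine keyu _ _ ?_
    rintro (_|((k|k)|(l|l))) <;> simp only [octGens, Sum.elim_inl, Sum.elim_inr]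
    · have := hbounds j; linarith
    · have := hbounds j; linarith
    · by_cases hjk : j = k
      · rw [if_pos hjk, hjk]
      · rw [if_neg hjk]; have := hbounds j; linarith
    · have := F7 l j; linarith
    · have := F6 l j; linarith
  have C3 : ∀ i, z (Sum.inl (Sum.inr i)) ≤ Mup i := by
    intro i
    refine keyu _ _ ?_
    rintro (_|((k|k)|(l|l))) <;> simp only [octGens, Sum.elim_inl, Sum.elim_inr]
    · exact F1 i
    · have := F2 i k; linarith
    · have := F3 i k; linarith
    · by_cases hil : i = l
      · rw [if_pos hil, hil]
      · rw [if_neg hil]; have := F10 l i; linarith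
    · by_cases hil : i = l
      · rw [if_pos hil, hil]; exact F1 l
      · rw [if_neg hil]; have := F12 l i; linarith
  have C4 : ∀ i, z (Sum.inr (Sum.inr i)) ≤ -mlow i := by
    intro i
    refine keyu _ _ ?_
    rintro (_|((k|k)|(l|l))) <;> simp only [octGens, Sum.elim_inl, Sum.elim_inr]
    · have := F1 i; linarith
    · have := F3 i k; linarith
    · have := F2 i k; linarith
    · by_cases hil : i = l
      · rw [if_pos hil, hil]; have := F1 l; linarith
      · rw [if_neg hil]; have := F13 l i; linarith
    · by_cases hil : i = l
      · rw [if_pos hil, hil]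
      · rw [if_neg hil]; have := F11 i l; linarith
  have C5 : ∀ i1 i2, z (Sum.inl (Sum.inr i1)) ≤ z (Sum.inl (Sum.inr i2)) + Delta i1 i2 := by
    intro i1 i2
    refine key _ _ _ ?_
    rintro (_|((k|k)|(l|l))) <;> simp only [octGens, Sum.elim_inl, Sum.elim_inr]
    · have := F11 i1 i2; linarith
    · have := F19 i1 i2 k; linarith
    · have := F20 i1 i2 k; linarith
    · by_cases h1 : i1 = l <;> by_cases h2 : i2 = l
      · rw [if_pos h1, if_pos h2, h1, h2]; have := F14 l l; linarith
      · rw [if_pos h1, if_neg h2, h1]; linarith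
      · rw [if_neg h1, if_pos h2, h2]; have := F14 l i1; linarith
      · rw [if_neg h1, if_neg h2]; have := F15 l i1 i2; linarith
    · by_cases h1 : i1 = l <;> by_cases h2 : i2 = l
      · rw [if_pos h1, if_pos h2, h1, h2]; have := F14 l l; linarith
      · rw [if_pos h1, if_neg h2, h1]; have := F16 l i2; linarith
      · rw [if_neg h1, if_pos h2, h2]; have := F17 l i1; linarith
      · rw [if_neg h1, if_neg h2]; have := F18 l i1 i2; linarith
  have C6 : ∀ i j, z (Sum.inl (Sum.inr i)) ≤ z (Sum.inl (Sum.inl j)) +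
      (Mup i - xl j - delta i j) := by
    intro i j
    refine key _ _ _ ?_
    rintro (_|((k|k)|(l|l))) <;> simp only [octGens, Sum.elim_inl, Sum.elim_inr]
    · have := F2 i j; linarith
    · by_cases hjk : j = k
      · rw [if_pos hjk, hjk]; have := F2 i k; have := F6 i k; linarith
      · rw [if_neg hjk]; have := F4 i j k hjk; linarith
    · by_cases hjk : j = k
      · rw [hjk]; have := F52 i k; linarith
      · have := F5 i j k hjk; linarith
    · by_cases hil : i = l
      · rw [if_pos hil, hil]; linarith
      · rw [if_neg hil]; have := F24 l i j; linarith
    · by_cases hil : i = l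
      · rw [if_pos hil, hil]; have := F2 l j; have := F9 l j; linarith
      · rw [if_neg hil]; have := F25 l i j; linarith
  have C7 : ∀ i j, z (Sum.inl (Sum.inl j)) ≤ z (Sum.inl (Sum.inr i)) +
      (xu j - mlow i - delta i j) := by
    intro i j
    refine key _ _ _ ?_
    rintro (_|((k|k)|(l|l))) <;> simp only [octGens, Sum.elim_inl, Sum.elim_inr]
    · have := F6 i j; linarith
    · by_cases hjk : j = k
      · rw [if_pos hjk, hjk]; linarith
      · rw [if_neg hjk]; have := F6 i j; have := F8 i k; linarith
    · have := F6 i j; have := F9 i k; linarith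
    · by_cases hil : i = l
      · rw [if_pos hil, hil]; have := F6 l j; have := F2 l j; linarith
      · rw [if_neg hil]; have := F26 l i j; linarith
    · by_cases hil : i = l
      · rw [if_pos hil, hil]; have := F53 l j; linarith
      · rw [if_neg hil]; have := F27 l i j; linarith
  have C8 : ∀ i1 i2, z (Sum.inl (Sum.inr i1)) ≤ z (Sum.inr (Sum.inr i2)) + Gam i1 i2 := by
    intro i1 i2
    refine key _ _ _ ?_
    rintro (_|((k|k)|(l|l))) <;> simp only [octGens, Sum.elim_inl, Sum.elim_inr]
    · have := F28 i1 i2; linarith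
    · have := F29 i1 i2 k; linarith
    · have := F30 i1 i2 k; linarith
    · by_cases h1 : i1 = l <;> by_cases h2 : i2 = l
      · rw [if_pos h1, if_pos h2, h1, h2]; have := F31 l; linarith
      · rw [if_pos h1, if_neg h2, h1]; linarith
      · rw [if_neg h1, if_pos h2, h2]; have := F32 l i1; linarith
      · rw [if_neg h1, if_neg h2]; have := F33 l i1 i2; linarith
    · by_cases h1 : i1 = l <;> by_cases h2 : i2 = l
      · rw [if_pos h1, if_pos h2, h1, h2]; have := F31 l; have := F1 l; linarith
      · rw [if_pos h1, if_neg h2, h1]; have := F36 l i2; linarith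
      · rw [if_neg h1, if_pos h2, h2]; have := Flg l i1; linarith
      · rw [if_neg h1, if_neg h2]; have := F37 l i1 i2; linarith
  have C9 : ∀ i1 i2, z (Sum.inr (Sum.inr i1)) ≤ z (Sum.inl (Sum.inr i2)) + -Lo i1 i2 := by
    intro i1 i2
    refine key _ _ _ ?_
    rintro (_|((k|k)|(l|l))) <;> simp only [octGens, Sum.elim_inl, Sum.elim_inr]
    · have := F38 i1 i2; linarith
    · have := F39 i1 i2 k; linarith
    · have := F40f i1 i2 k; linarith
    · by_cases h1 : i1 = l <;> by_cases h2 : i2 = l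
      · rw [if_pos h1, if_pos h2, h1, h2]; have := F35 l; have := F1 l; linarith
      · rw [if_pos h1, if_neg h2, h1]; have := F42 l i2; linarith
      · rw [if_neg h1, if_pos h2, h2]; have := Flg i1 l; linarith
      · rw [if_neg h1, if_neg h2]; have := F44 l i1 i2; linarith
    · by_cases h1 : i1 = l <;> by_cases h2 : i2 = l
      · rw [if_pos h1, if_pos h2, h1, h2]; have := F35 l; linarith
      · rw [if_pos h1, if_neg h2, h1]; linarith
      · rw [if_neg h1, if_pos h2, h2]; have := F45 i1 l; linarith
      · rw [if_neg h1, if_neg h2]; have := F46 l i1 i2; linarith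
  have C10 : ∀ i j, z (Sum.inl (Sum.inr i)) ≤ z (Sum.inr (Sum.inl j)) +
      (Mup i + xu j - gam i j) := by
    intro i j
    refine key _ _ _ ?_
    rintro (_|((k|k)|(l|l))) <;> simp only [octGens, Sum.elim_inl, Sum.elim_inr]
    · have := F3 i j; linarith
    · by_cases hjk : j = k
      · rw [hjk]; have := F52 i k; linarith
      · have := F5 i k j (Ne.symm hjk); linarith
    · by_cases hjk : j = k
      · rw [if_pos hjk, hjk]; have := F3 i k; have := F7 i k; linarith
      · rw [if_neg hjk]; have := F51 i j k (hjk); linarith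
    · by_cases hil : i = l
      · rw [if_pos hil, hil]; linarith
      · rw [if_neg hil]; have := F47 l i j; linarith
    · by_cases hil : i = l
      · rw [if_pos hil, hil]; have := F3 l j; have := F8 l j; linarith
      · rw [if_neg hil]; have := F48 l i j; linarith
  have C11 : ∀ i j, z (Sum.inr (Sum.inl j)) ≤ z (Sum.inl (Sum.inr i)) +
      (-mlow i - xl j - gam i j) := by
    intro i j
    refine key _ _ _ ?_
    rintro (_|((k|k)|(l|l))) <;> simp only [octGens, Sum.elim_inl, Sum.elim_inr]
    · have := F7 i j; linarith
    · have := F7 i j; have := F8 i k; linarith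
    · by_cases hjk : j = k
      · rw [if_pos hjk, hjk]; linarith
      · rw [if_neg hjk]; have := F7 i j; have := F9 i k; linarith
    · by_cases hil : i = l
      · rw [if_pos hil, hil]; have := F7 l j; have := F3 l j; linarith
      · rw [if_neg hil]; have := F49 l i j; linarith
    · by_cases hil : i = l
      · rw [if_pos hil, hil]; have := F53 l j; linarith
      · rw [if_neg hil]; have := F50 l i j; linarith
  refine ⟨fun j => z (Sum.inl (Sum.inl j)), fun i => z (Sum.inl (Sum.inr i)),
    ⟨?_, ?_, ?_, ?_, ?_, ?_⟩, ?_⟩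
  · intro j
    have h1 := C1 j
    have h2 := C2 j
    have h3 := hneg2 (Sum.inl j)
    exact ⟨by linarith, h1⟩
  · intro i
    have h1 := C3 i
    have h2 := C4 i
    have h3 := hneg2 (Sum.inr i)
    exact ⟨by linarith, h1⟩
  · intro i1 i2
    have := C5 i1 i2; linarith
  · intro i j
    have h1 := C6 i j
    have h2 := C7 i j
    exact ⟨by linarith, by linarith⟩
  · intro i1 i2
    have h1 := C8 i1 i2
    have h2 := C9 i1 i2
    have h3 := hneg2 (Sum.inr i1)
    have h4 := hneg2 (Sum.inr i2)
    exact ⟨by linarith, by linarith⟩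
  · intro i j
    have h1 := C10 i j
    have h2 := C11 i j
    have h3 := hneg2 (Sum.inl j)
    exact ⟨by linarith, by linarith⟩
  · funext t
    rcases t with (j|i)|(j|i) <;> simp only [Sum.elim_inl, Sum.elim_inr]
    · rw [hneg2 (Sum.inl j)]
    · rw [hneg2 (Sum.inr i)]
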